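/- On the octonionic Heisenberg algebra h(O) = O ⊕ Im(O) (pair (8,7)), every skew-symmetric map F of type II satisfying condition (C2) is zero. -/

import Mathlib

open RealInnerProductSpace

section Helpers
variable {A : Type*} [NormedAddCommGroup A] [InnerProductSpace ℝ A]
variable (mul : A →ₗ[ℝ] A →ₗ[ℝ] A) (one : A) (conj : A → A)

lemma oN2 (hnorm : ∀ a b : A, ‖mul a b‖ = ‖a‖ * ‖b‖) (x y : A) :
    ⟪mul x y, mul x y⟫ = ⟪x,x⟫ * ⟪y,y⟫ := by
  rw [real_inner_self_eq_norm_mul_norm, real_inner_self_eq_norm_mul_norm x,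
    real_inner_self_eq_norm_mul_norm y, hnorm]
  ring

lemma oP1 (hnorm : ∀ a b : A, ‖mul a b‖ = ‖a‖ * ‖b‖) (a b c : A) :
    ⟪mul a b, mul a c⟫ = ⟪a,a⟫ * ⟪b,c⟫ := by
  have h1 := oN2 mul hnorm a (b+c)
  have h2 := oN2 mul hnorm a b
  have h3 := oN2 mul hnorm a c
  rw [map_add, real_inner_add_add_self, real_inner_add_add_self] at h1
  linear_combination (h1 - h2 - h3)/2

lemma oP3 (hnorm : ∀ a b : A, ‖mul a b‖ = ‖a‖ * ‖b‖) (a b c d : A) :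
    ⟪mul a b, mul c d⟫ + ⟪mul c b, mul a d⟫ = 2 * ⟪a,c⟫ * ⟪b,d⟫ := by
  have h1 := oP1 mul hnorm (a+c) b d
  rw [map_add, LinearMap.add_apply, LinearMap.add_apply, inner_add_left, inner_add_right,
    inner_add_right, real_inner_add_add_self] at h1
  have h2 := oP1 mul hnorm a b d
  have h3 := oP1 mul hnorm c b d
  linear_combination h1 - h2 - h3

lemma oP2 (hnorm : ∀ a b : A, ‖mul a b‖ = ‖a‖ * ‖b‖) (a b c : A) :
    ⟪mul a b, mul c b⟫ = ⟪a,c⟫ * ⟪b,b⟫ := by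
  have h1 := oP3 mul hnorm a b c b
  have h2 := real_inner_comm (mul c b) (mul a b)
  linear_combination h1/2 + h2/2

lemma oP4 (hnorm : ∀ a b : A, ‖mul a b‖ = ‖a‖ * ‖b‖) (a b c d : A) :
    ⟪mul a b, mul c d⟫ + ⟪mul a d, mul c b⟫ = 2 * ⟪a,c⟫ * ⟪b,d⟫ := by
  have h1 := oP2 mul hnorm a (b+d) c
  rw [map_add, map_add, inner_add_left, inner_add_right, inner_add_right,
    real_inner_add_add_self] at h1
  have h2 := oP2 mul hnorm a b c
  have h3 := oP2 mul hnorm a d c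
  linear_combination h1 - h2 - h3

end Helpers

section Helpers2
variable {A : Type*} [NormedAddCommGroup A] [InnerProductSpace ℝ A]
variable (mul : A →ₗ[ℝ] A →ₗ[ℝ] A) (one : A) (conj : A → A)
variable (hnorm : ∀ a b : A, ‖mul a b‖ = ‖a‖ * ‖b‖)
variable (honel : ∀ a, mul one a = a) (honer : ∀ a, mul a one = a)
variable (hconj : ∀ a, conj a = (2 * ⟪one, a⟫) • one - a)
variable (h11 : ⟪one, one⟫ = (1:ℝ))

include hnorm honel hconj in
lemma oAD1 (a b c : A) : ⟪mul a b, c⟫ = ⟪b, mul (conj a) c⟫ := by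
  have h := oP3 mul hnorm a b one c
  rw [honel, honel] at h
  simp only [hconj, map_sub, map_smul, LinearMap.sub_apply, LinearMap.smul_apply,
    inner_sub_right, real_inner_smul_right, honel]
  linear_combination h + 2*⟪b,c⟫*(real_inner_comm one a)

include hnorm honer hconj in
lemma oAD2 (a b c : A) : ⟪mul a b, c⟫ = ⟪a, mul c (conj b)⟫ := by
  have h := oP4 mul hnorm a b c one
  rw [honer, honer] at h
  simp only [hconj, map_sub, map_smul, inner_sub_right, real_inner_smul_right, honer]
  linear_combination h + 2*⟪a,c⟫*(real_inner_comm one b)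

include hnorm honel honer in
lemma oIP1 (x y : A) : ⟪mul y x, one⟫ = 2*⟪y,one⟫*⟪x,one⟫ - ⟪y,x⟫ := by
  have h := oP4 mul hnorm y x one one
  rw [honel, honer, honel] at h
  linear_combination h

include hnorm honel honer in
lemma oSQLi (b c x : A) : ⟪mul b c, x⟫ + ⟪mul c b, x⟫
    = 2*⟪b,x⟫*⟪c,one⟫ + 2*⟪c,x⟫*⟪b,one⟫ - 2*⟪x,one⟫*⟪c,b⟫ := by
  have hII := oP3 mul hnorm b c x one
  have hIII := oP3 mul hnorm c b x one
  have hIV := oP4 mul hnorm x c one b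
  simp only [honel, honer] at hII hIII hIV
  linear_combination hII + hIII - hIV

include hconj h11 in
lemma oCI (a b : A) : ⟪conj a, conj b⟫ = ⟪a, b⟫ := by
  simp only [hconj, inner_sub_left, inner_sub_right, real_inner_smul_left,
    real_inner_smul_right]
  linear_combination (4*⟪one,a⟫*⟪one,b⟫)*h11 - 2*⟪one,b⟫*(real_inner_comm one a)

include hconj h11 in
lemma oCC (a : A) : conj (conj a) = a := by
  apply ext_inner_right ℝ; intro t
  simp only [hconj, inner_sub_left, real_inner_smul_left, inner_sub_right,
    real_inner_smul_right]
  linear_combination 4*⟪one,a⟫*⟪one,t⟫*h11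

include hnorm honel hconj h11 in
lemma oL1 (a c : A) : mul a (mul (conj a) c) = ⟪a,a⟫ • c := by
  apply ext_inner_right ℝ; intro t
  rw [oAD1 mul one conj hnorm honel hconj a (mul (conj a) c) t,
    oP1 mul hnorm (conj a) c t, oCI one conj hconj h11 a a, real_inner_smul_left]

include hnorm honel hconj h11 in
lemma oL1' (a b c : A) :
    mul a (mul (conj b) c) + mul b (mul (conj a) c) = (2*⟪a,b⟫) • c := by
  apply ext_inner_right ℝ; intro t
  rw [inner_add_left, oAD1 mul one conj hnorm honel hconj a (mul (conj b) c) t,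
    oAD1 mul one conj hnorm honel hconj b (mul (conj a) c) t, real_inner_smul_left]
  have h := oP3 mul hnorm (conj b) c (conj a) t
  have h2 := oCI one conj hconj h11 b a
  have h3 := real_inner_comm a b
  linear_combination h + 2*⟪c,t⟫*h2 + 2*⟪c,t⟫*h3

include hnorm honer hconj h11 in
lemma oR1 (a c : A) : mul (mul c (conj a)) a = ⟪a,a⟫ • c := by
  apply ext_inner_right ℝ; intro t
  rw [oAD2 mul one conj hnorm honer hconj (mul c (conj a)) a t,
    oP2 mul hnorm c (conj a) t, oCI one conj hconj h11 a a, real_inner_smul_left]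
  ring

end Helpers2

section Helpers3
variable {A : Type*} [NormedAddCommGroup A] [InnerProductSpace ℝ A]
variable (mul : A →ₗ[ℝ] A →ₗ[ℝ] A) (one : A) (conj : A → A)
variable (hnorm : ∀ a b : A, ‖mul a b‖ = ‖a‖ * ‖b‖)
variable (honel : ∀ a, mul one a = a) (honer : ∀ a, mul a one = a)
variable (hconj : ∀ a, conj a = (2 * ⟪one, a⟫) • one - a)
variable (h11 : ⟪one, one⟫ = (1:ℝ))

include hnorm honel honer hconj h11 in
lemma oLemX (e b : A) (he1 : ⟪e,one⟫ = 0) (heb : ⟪e,b⟫ = 0) :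
    mul e b = mul (conj b) e := by
  apply ext_inner_right ℝ; intro t
  rw [oAD2 mul one conj hnorm honer hconj e b t,
    oAD1 mul one conj hnorm honel hconj (conj b) e t, oCC one conj hconj h11 b]
  simp only [hconj, map_sub, map_smul, inner_sub_right, real_inner_smul_right, honer]
  have hs := oSQLi mul one hnorm honel honer b t e
  have c1 := real_inner_comm (mul t b) e
  have c2 := real_inner_comm (mul b t) e
  have c3 := real_inner_comm e b
  have c5 := real_inner_comm one b
  have c6 := real_inner_comm e t
  linear_combination -hs - c1 - c2 + 2*⟪t,b⟫*he1 - 2*⟪t,one⟫*c3 - 2*⟪t,one⟫*heb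
    - 2*⟪b,one⟫*c6 - 2*⟪e,t⟫*c5

include hnorm honel honer in
lemma oUSQ (u : A) (hu1 : ⟪u,one⟫ = 0) (huu : ⟪u,u⟫ = 1) : mul u u = -one := by
  apply ext_inner_right ℝ; intro t
  have h := oP3 mul hnorm u u one t
  rw [honel, honel] at h
  have h2 := oP1 mul hnorm u one t
  rw [honer] at h2
  rw [inner_neg_left]
  linear_combination h - h2 + 2*⟪u,t⟫*hu1 - ⟪one,t⟫*huu

include hnorm honel honer in
lemma oAC (u v : A) (hu1 : ⟪u,one⟫ = 0) (hv1 : ⟪v,one⟫ = 0) (huv : ⟪u,v⟫ = 0) :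
    mul u v = - mul v u := by
  apply ext_inner_right ℝ; intro t
  rw [inner_neg_left]
  have hs := oSQLi mul one hnorm honel honer u v t
  have c1 := real_inner_comm u v
  linear_combination hs + 2*⟪u,t⟫*hv1 + 2*⟪v,t⟫*hu1 - 2*⟪t,one⟫*huv - 2*⟪t,one⟫*c1

include hnorm honel hconj h11 in
lemma oLI (u : A) (hcu : conj u = -u) (huu : ⟪u,u⟫ = 1) (c : A) :
    mul u (mul u c) = -c := by
  have h := oL1 mul one conj hnorm honel hconj h11 u c
  rw [hcu, map_neg, LinearMap.neg_apply, map_neg, huu, one_smul] at h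
  exact neg_eq_iff_eq_neg.mp h

include hnorm honer hconj h11 in
lemma oRI (u : A) (hcu : conj u = -u) (huu : ⟪u,u⟫ = 1) (c : A) :
    mul (mul c u) u = -c := by
  have h := oR1 mul one conj hnorm honer hconj h11 u c
  rw [hcu, map_neg, map_neg, LinearMap.neg_apply, huu, one_smul] at h
  exact neg_eq_iff_eq_neg.mp h

include hnorm honel honer hconj h11 in
lemma oCP (x y : A) : conj (mul x y) = mul (conj y) (conj x) := by
  apply ext_inner_right ℝ; intro t
  rw [hconj (mul x y), oAD1 mul one conj hnorm honel hconj (conj y) (conj x) t,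
    oCC one conj hconj h11 y, hconj x]
  simp only [inner_sub_left, real_inner_smul_left]
  have hP := oIP1 mul one hnorm honel honer y x
  have hQ := oIP1 mul one hnorm honel honer t y
  have hR := oP4 mul hnorm x y t one
  rw [honer, honer] at hR
  have hS := oSQLi mul one hnorm honel honer y t x
  have c1 := real_inner_comm (mul x y) one
  have c2 := real_inner_comm (mul y t) one
  have c3 := real_inner_comm (mul y t) x
  have c4 := real_inner_comm (mul t y) x
  have c5 := real_inner_comm one x
  have c6 := real_inner_comm one y
  have c7 := real_inner_comm one t
  have c8 := real_inner_comm y t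
  have c9 := real_inner_comm x y
  have c10 := real_inner_comm x t
  linear_combination (2)*⟪one,t⟫*hP + (-2)*⟪one,x⟫*hQ + (-1)*hR + hS + (2)*⟪one,t⟫*c1 + (-2)*⟪one,x⟫*c2 + c3 + c4 + (-2)*⟪t,y⟫*c5 + (4)*⟪one,t⟫*⟪y,one⟫*c5 + (-2)*⟪x,t⟫*c6 + (2)*⟪t,x⟫*c6 + (4)*⟪one,t⟫*⟪one,x⟫*c6 + (-4)*⟪one,x⟫*⟪t,one⟫*c6 + (2)*⟪y,x⟫*c7 + (-4)*⟪one,x⟫*⟪one,y⟫*c7 + (-2)*⟪one,x⟫*c8 + (2)*⟪one,t⟫*c9 + (2)*⟪one,y⟫*c10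

include hnorm honel honer hconj h11 in
lemma oCZ (e z : A) (he1 : ⟪e,one⟫=0) (h1e : ⟪one,e⟫=0) (hez : ⟪e,z⟫=0) :
    conj (mul z e) = -(mul z e) := by
  rw [oCP mul one conj hnorm honel honer hconj h11 z e]
  have hce : conj e = -e := by rw [hconj, h1e]; simp
  rw [hce, map_neg, LinearMap.neg_apply]
  have hecz : ⟪e, conj z⟫ = 0 := by
    rw [hconj z, inner_sub_right, real_inner_smul_right, he1, hez]; ring
  rw [oLemX mul one conj hnorm honel honer hconj h11 e (conj z) he1 hecz,
    oCC one conj hconj h11 z]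

include hconj in
lemma oCneg (u : A) : conj (-u) = -(conj u) := by
  rw [hconj, hconj, inner_neg_right]
  module

include hnorm honel honer hconj h11 in
lemma oCD1 (e x y : A) (he1 : ⟪e,one⟫=0) (h1e : ⟪one,e⟫=0) (hex : ⟪e,x⟫=0)
    (hey : ⟪e,y⟫=0) (heyx : ⟪e, mul y x⟫ = 0) :
    mul x (mul y e) = mul (mul y x) e := by
  have h1 := oL1' mul one conj hnorm honel hconj h11 x (conj y) e
  rw [oCC one conj hconj h11 y] at h1
  rw [← oLemX mul one conj hnorm honel honer hconj h11 e x he1 hex] at h1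
  have h3 := oL1' mul one conj hnorm honel hconj h11 (conj y) (-e) x
  have hce : conj (-e) = e := by rw [hconj, inner_neg_right, h1e]; simp
  rw [hce, oCC one conj hconj h11 y, map_neg, LinearMap.neg_apply] at h3
  have hs : (2*⟪conj y, -e⟫ : ℝ) = 0 := by
    rw [inner_neg_right, hconj, inner_sub_left, real_inner_smul_left, h1e]
    linear_combination 2*(real_inner_comm e y) + 2*hey
  rw [hs, zero_smul] at h3
  rw [add_neg_eq_zero.mp h3,
    oLemX mul one conj hnorm honel honer hconj h11 e (mul y x) he1 heyx,
    hconj (mul y x), map_sub, map_smul, LinearMap.sub_apply, LinearMap.smul_apply,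
    honel] at h1
  have hsc : (⟪x, conj y⟫ : ℝ) = ⟪one, mul y x⟫ := by
    rw [hconj y, inner_sub_right, real_inner_smul_right]
    have hI := oIP1 mul one hnorm honel honer x y
    have d1 := real_inner_comm (mul y x) one
    have d2 := real_inner_comm one y
    have d3 := real_inner_comm x y
    linear_combination -d1 - hI - 2*⟪x,one⟫*d2 + d3
  rw [hsc] at h1
  linear_combination (norm := module) h1

include hnorm honel honer hconj h11 in
lemma oCD2 (e x y : A) (he1 : ⟪e,one⟫=0) (h1e : ⟪one,e⟫=0) (hex : ⟪e,x⟫=0)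
    (hey : ⟪e,y⟫=0) (hexy : ⟪e, mul x y⟫ = 0) (hcy : conj y = -y) :
    mul (mul x e) y = -(mul (mul x y) e) := by
  have hinj : ∀ u v : A, conj u = conj v → u = v := fun u v h => by
    rw [← oCC one conj hconj h11 u, h, oCC one conj hconj h11 v]
  apply hinj
  have e1 : conj (mul (mul x e) y) = mul (mul x y) e := by
    rw [oCP mul one conj hnorm honel honer hconj h11 (mul x e) y, hcy,
      oCZ mul one conj hnorm honel honer hconj h11 e x he1 h1e hex,
      map_neg mul y, LinearMap.neg_apply, map_neg, neg_neg,
      oCD1 mul one conj hnorm honel honer hconj h11 e y x he1 h1e hey hex hexy]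
  have e2 : conj (-(mul (mul x y) e)) = mul (mul x y) e := by
    rw [oCneg one conj hconj,
      oCZ mul one conj hnorm honel honer hconj h11 e (mul x y) he1 h1e hexy, neg_neg]
  rw [e1, e2]

include hnorm honel honer hconj h11 in
lemma oCD3 (e x y : A) (he1 : ⟪e,one⟫=0) (h1e : ⟪one,e⟫=0) (hex : ⟪e,x⟫=0)
    (hee : ⟪e,e⟫ = 1) (heyx : ⟪e, mul y x⟫ = 0) :
    mul (mul x e) (mul y e) = -(mul (conj y) x) := by
  have hce : conj e = -e := by rw [hconj, h1e]; simp
  have h := oL1' mul one conj hnorm honel hconj h11 (mul x e) (conj y) e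
  rw [oCC one conj hconj h11 y,
    oCZ mul one conj hnorm honel honer hconj h11 e x he1 h1e hex,
    map_neg, LinearMap.neg_apply,
    oRI mul one conj hnorm honer hconj h11 e hce hee x, neg_neg] at h
  have hz : (⟪mul x e, conj y⟫ : ℝ) = 0 := by
    rw [oAD1 mul one conj hnorm honel hconj x e (conj y),
      ← oCP mul one conj hnorm honel honer hconj h11 y x,
      hconj (mul y x), inner_sub_right, real_inner_smul_right, he1, heyx]
    ring
  rw [hz, mul_zero, zero_smul] at h
  exact add_eq_zero_iff_eq_neg.mp h

end Helpers3

lemma exists_unit_orth {A : Type*} [NormedAddCommGroup A] [InnerProductSpace ℝ A]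
    [FiniteDimensional ℝ A] (hdim : Module.finrank ℝ A = 8) {n : ℕ} (hn : n < 8)
    (w : Fin n → A) : ∃ e : A, ⟪e,e⟫ = 1 ∧ ∀ m, ⟪e, w m⟫ = 0 := by
  set W := Submodule.span ℝ (Set.range w) with hW
  have hWr : Module.finrank ℝ W < 8 :=
    lt_of_le_of_lt ((finrank_range_le_card w).trans_eq (by simp)) hn
  have hbot : Wᗮ ≠ ⊥ := by
    intro hb
    have h := Submodule.finrank_add_finrank_orthogonal W
    rw [hb, finrank_bot, hdim] at h
    omega
  obtain ⟨x, hxW, hx0⟩ := Submodule.exists_mem_ne_zero_of_ne_bot hbot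
  have hxn : ‖x‖ ≠ 0 := norm_ne_zero_iff.mpr hx0
  refine ⟨(‖x‖⁻¹ : ℝ) • x, ?_, ?_⟩
  · rw [real_inner_smul_left, real_inner_smul_right, real_inner_self_eq_norm_mul_norm]
    field_simp
  · intro m
    rw [real_inner_smul_left]
    have h0 : ⟪w m, x⟫ = 0 :=
      (Submodule.mem_orthogonal W x).mp hxW (w m) (Submodule.subset_span ⟨m, rfl⟩)
    rw [real_inner_comm] at h0
    rw [h0, mul_zero]
set_option maxHeartbeats 3000000 in
/-- On the octonionic Heisenberg algebra `h(𝕆) = 𝕆 ⊕ Im 𝕆`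
(pair (8,7)), every skew-symmetric map of type II satisfying condition (C2) is
zero.  Here `𝕆` is axiomatized as an 8-dimensional normed real division algebra
(by Hurwitz's theorem this is exactly the octonions), the bracket on
`v = 𝕆` is `[U,V] = −Im(U·V̄) ∈ z = Im 𝕆`, a type II map is encoded by its two
components `f : v → z` and `g : z → v`, tied together by skew-symmetry. -/
theorem stmt_17 {A : Type*} [NormedAddCommGroup A] [InnerProductSpace ℝ A]
    [FiniteDimensional ℝ A] (hdim : Module.finrank ℝ A = 8)
    (mul : A →ₗ[ℝ] A →ₗ[ℝ] A) (one : A)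
    (honel : ∀ a, mul one a = a) (honer : ∀ a, mul a one = a)
    (hnorm : ∀ a b, ‖mul a b‖ = ‖a‖ * ‖b‖)
    (conj : A → A) (hconj : ∀ a, conj a = (2 * ⟪one, a⟫) • one - a)
    (im : A → A) (him : ∀ a, im a = a - ⟪one, a⟫ • one)
    (br : A → A → A) (hbr : ∀ u v, br u v = - im (mul u (conj v)))
    (f : A →ₗ[ℝ] A) (g : A →ₗ[ℝ] A)
    (hfim : ∀ u, ⟪one, f u⟫ = 0)
    (hskew : ∀ u : A, ∀ zz : A, ⟪one, zz⟫ = 0 → ⟪f u, zz⟫ = - ⟪u, g zz⟫)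
    (hC2 : ∀ u v w : A,
      ⟪f u, br v w⟫ + ⟪f v, br w u⟫ + ⟪f w, br u v⟫ = 0) :
    f = 0 ∧ ∀ zz : A, ⟪one, zz⟫ = 0 → g zz = 0 := by
  have hone0 : one ≠ 0 := by
    intro h0
    have hz : ∀ a : A, a = 0 := fun a => by
      rw [← honel a, h0, map_zero, LinearMap.zero_apply]
    have hsub : Subsingleton A := ⟨fun a b => by rw [hz a, hz b]⟩
    rw [Module.finrank_zero_of_subsingleton] at hdim
    exact absurd hdim (by norm_num)
  have hnone : ‖one‖ = 1 := by
    have h := hnorm one one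
    rw [honel] at h
    have h2 : ‖one‖ ≠ 0 := norm_ne_zero_iff.mpr hone0
    have h3 : ‖one‖ * 1 = ‖one‖ * ‖one‖ := by rw [mul_one]; exact h
    exact (mul_left_cancel₀ h2 h3).symm
  have h11 : ⟪one, one⟫ = (1:ℝ) := by
    rw [real_inner_self_eq_norm_mul_norm, hnone]; norm_num
  have hfim' : ∀ u : A, ⟪f u, one⟫ = 0 := fun u => by
    rw [real_inner_comm]; exact hfim u
  obtain ⟨i, hii, hi0⟩ := exists_unit_orth hdim (by norm_num) ![one]
  have hp10 : ⟪i, one⟫ = 0 := by simpa using hi0 0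
  obtain ⟨j, hjj, hj0⟩ := exists_unit_orth hdim (by norm_num) ![one, i]
  have hp20 : ⟪j, one⟫ = 0 := by simpa using hj0 0
  have hp21 : ⟪j, i⟫ = 0 := by simpa using hj0 1
  obtain ⟨k, hk⟩ : ∃ k : A, k = mul i j := ⟨_, rfl⟩
  have hp11 : ⟪i, i⟫ = 1 := hii
  have hp22 : ⟪j, j⟫ = 1 := hjj
  have hp00 : ⟪one, one⟫ = 1 := h11
  have hp01 : ⟪one, i⟫ = 0 := by rw [real_inner_comm]; exact hp10
  have hp02 : ⟪one, j⟫ = 0 := by rw [real_inner_comm]; exact hp20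
  have hp12 : ⟪i, j⟫ = 0 := by rw [real_inner_comm]; exact hp21
  have hp30 : ⟪k, one⟫ = 0 := by
    rw [hk, oIP1 mul one hnorm honel honer j i, hp10, hp12]; ring
  have hp31 : ⟪k, i⟫ = 0 := by
    have h := oP1 mul hnorm i j one
    rw [honer] at h
    rw [hk, h, hp20]; ring
  have hp32 : ⟪k, j⟫ = 0 := by
    have h := oP2 mul hnorm i j one
    rw [honel] at h
    rw [hk, h, hp10]; ring
  have hp33 : ⟪k, k⟫ = 1 := by rw [hk, oN2 mul hnorm i j, hp11, hp22]; ring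
  have hp03 : ⟪one, k⟫ = 0 := by rw [real_inner_comm]; exact hp30
  have hp13 : ⟪i, k⟫ = 0 := by rw [real_inner_comm]; exact hp31
  have hp23 : ⟪j, k⟫ = 0 := by rw [real_inner_comm]; exact hp32
  obtain ⟨e, hee, he0⟩ := exists_unit_orth hdim (by norm_num) ![one, i, j, k]
  have hp40 : ⟪e, one⟫ = 0 := by simpa using he0 0
  have hp41 : ⟪e, i⟫ = 0 := by simpa using he0 1
  have hp42 : ⟪e, j⟫ = 0 := by simpa using he0 2
  have hp43 : ⟪e, k⟫ = 0 := by simpa using he0 3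
  have hp44 : ⟪e, e⟫ = 1 := hee
  have hp004 : ⟪one, e⟫ = 0 := by rw [real_inner_comm]; exact hp40
  have hp014 : ⟪i, e⟫ = 0 := by rw [real_inner_comm]; exact hp41
  have hp024 : ⟪j, e⟫ = 0 := by rw [real_inner_comm]; exact hp42
  have hp034 : ⟪k, e⟫ = 0 := by rw [real_inner_comm]; exact hp43
  have hp04 : ⟪one, e⟫ = 0 := hp004
  have hp14 : ⟪i, e⟫ = 0 := hp014
  have hp24 : ⟪j, e⟫ = 0 := hp024
  have hp34 : ⟪k, e⟫ = 0 := hp034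
  have hc0 : conj one = one := by rw [hconj, h11, mul_one, two_smul]; abel
  have hc1 : conj i = -i := by rw [hconj, hp01]; simp
  have hc2 : conj j = -j := by rw [hconj, hp02]; simp
  have hc3 : conj k = -k := by rw [hconj, hp03]; simp
  have hc4 : conj e = -e := by rw [hconj, hp04]; simp
  have m11 : mul i i = -one := oUSQ mul one hnorm honel honer i hp10 hp11
  have m22 : mul j j = -one := oUSQ mul one hnorm honel honer j hp20 hp22
  have m12 : mul i j = k := hk.symm
  have m21 : mul j i = -k := by
    have h := oAC mul one hnorm honel honer i j hp10 hp20 hp12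
    rw [← hk] at h
    linear_combination (norm := module) h
  have m13 : mul i k = -j := by
    rw [hk]; exact oLI mul one conj hnorm honel hconj h11 i hc1 hp11 j
  have m31 : mul k i = j := by
    have h := oAC mul one hnorm honel honer i k hp10 hp30 hp13
    rw [m13] at h
    linear_combination (norm := module) h
  have m32 : mul k j = -i := by
    rw [hk]; exact oRI mul one conj hnorm honer hconj h11 j hc2 hp22 i
  have m23 : mul j k = i := by
    have h := oAC mul one hnorm honel honer j k hp20 hp30 hp23
    rw [m32, neg_neg] at h; exact h
  have m33 : mul k k = -one := oUSQ mul one hnorm honel honer k hp30 hp33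
  have hE11 : ⟪e, mul i i⟫ = 0 := by rw [m11]; simp [hp40, hp41, hp42, hp43]
  have hE12 : ⟪e, mul i j⟫ = 0 := by rw [m12]; simp [hp40, hp41, hp42, hp43]
  have hE13 : ⟪e, mul i k⟫ = 0 := by rw [m13]; simp [hp40, hp41, hp42, hp43]
  have hE21 : ⟪e, mul j i⟫ = 0 := by rw [m21]; simp [hp40, hp41, hp42, hp43]
  have hE22 : ⟪e, mul j j⟫ = 0 := by rw [m22]; simp [hp40, hp41, hp42, hp43]
  have hE23 : ⟪e, mul j k⟫ = 0 := by rw [m23]; simp [hp40, hp41, hp42, hp43]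
  have hE31 : ⟪e, mul k i⟫ = 0 := by rw [m31]; simp [hp40, hp41, hp42, hp43]
  have hE32 : ⟪e, mul k j⟫ = 0 := by rw [m32]; simp [hp40, hp41, hp42, hp43]
  have hE33 : ⟪e, mul k k⟫ = 0 := by rw [m33]; simp [hp40, hp41, hp42, hp43]
  obtain ⟨ie, hie⟩ : ∃ x : A, x = mul i e := ⟨_, rfl⟩
  obtain ⟨je, hje⟩ : ∃ x : A, x = mul j e := ⟨_, rfl⟩
  obtain ⟨ke, hke⟩ : ∃ x : A, x = mul k e := ⟨_, rfl⟩
  have hp50 : ⟪ie, one⟫ = 0 := by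
    rw [hie, oAD1 mul one conj hnorm honel hconj i e one, hc1, map_neg mul i,
      LinearMap.neg_apply, inner_neg_right]
    rw [honer, hp41]; ring
  have hp51 : ⟪ie, i⟫ = 0 := by
    rw [hie, oAD1 mul one conj hnorm honel hconj i e i, hc1, map_neg mul i,
      LinearMap.neg_apply, inner_neg_right]
    rw [m11]; simp [hp40, hp41, hp42, hp43]
  have hp52 : ⟪ie, j⟫ = 0 := by
    rw [hie, oAD1 mul one conj hnorm honel hconj i e j, hc1, map_neg mul i,
      LinearMap.neg_apply, inner_neg_right]
    rw [m12]; simp [hp40, hp41, hp42, hp43]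
  have hp53 : ⟪ie, k⟫ = 0 := by
    rw [hie, oAD1 mul one conj hnorm honel hconj i e k, hc1, map_neg mul i,
      LinearMap.neg_apply, inner_neg_right]
    rw [m13]; simp [hp40, hp41, hp42, hp43]
  have hp54 : ⟪ie, e⟫ = 0 := by
    have h := oP2 mul hnorm i e one
    rw [honel] at h
    rw [hie, h, hp10]; ring
  have hp60 : ⟪je, one⟫ = 0 := by
    rw [hje, oAD1 mul one conj hnorm honel hconj j e one, hc2, map_neg mul j,
      LinearMap.neg_apply, inner_neg_right]
    rw [honer, hp42]; ring
  have hp61 : ⟪je, i⟫ = 0 := by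
    rw [hje, oAD1 mul one conj hnorm honel hconj j e i, hc2, map_neg mul j,
      LinearMap.neg_apply, inner_neg_right]
    rw [m21]; simp [hp40, hp41, hp42, hp43]
  have hp62 : ⟪je, j⟫ = 0 := by
    rw [hje, oAD1 mul one conj hnorm honel hconj j e j, hc2, map_neg mul j,
      LinearMap.neg_apply, inner_neg_right]
    rw [m22]; simp [hp40, hp41, hp42, hp43]
  have hp63 : ⟪je, k⟫ = 0 := by
    rw [hje, oAD1 mul one conj hnorm honel hconj j e k, hc2, map_neg mul j,
      LinearMap.neg_apply, inner_neg_right]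
    rw [m23]; simp [hp40, hp41, hp42, hp43]
  have hp64 : ⟪je, e⟫ = 0 := by
    have h := oP2 mul hnorm j e one
    rw [honel] at h
    rw [hje, h, hp20]; ring
  have hp70 : ⟪ke, one⟫ = 0 := by
    rw [hke, oAD1 mul one conj hnorm honel hconj k e one, hc3, map_neg mul k,
      LinearMap.neg_apply, inner_neg_right]
    rw [honer, hp43]; ring
  have hp71 : ⟪ke, i⟫ = 0 := by
    rw [hke, oAD1 mul one conj hnorm honel hconj k e i, hc3, map_neg mul k,
      LinearMap.neg_apply, inner_neg_right]
    rw [m31]; simp [hp40, hp41, hp42, hp43]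
  have hp72 : ⟪ke, j⟫ = 0 := by
    rw [hke, oAD1 mul one conj hnorm honel hconj k e j, hc3, map_neg mul k,
      LinearMap.neg_apply, inner_neg_right]
    rw [m32]; simp [hp40, hp41, hp42, hp43]
  have hp73 : ⟪ke, k⟫ = 0 := by
    rw [hke, oAD1 mul one conj hnorm honel hconj k e k, hc3, map_neg mul k,
      LinearMap.neg_apply, inner_neg_right]
    rw [m33]; simp [hp40, hp41, hp42, hp43]
  have hp74 : ⟪ke, e⟫ = 0 := by
    have h := oP2 mul hnorm k e one
    rw [honel] at h
    rw [hke, h, hp30]; ring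
  have hp55 : ⟪ie, ie⟫ = 1 := by
    have h := oP2 mul hnorm i e i
    rw [hie, h, hp11, hee]; ring
  have hp56 : ⟪ie, je⟫ = 0 := by
    have h := oP2 mul hnorm i e j
    rw [hie, hje, h, hp12, hee]; ring
  have hp57 : ⟪ie, ke⟫ = 0 := by
    have h := oP2 mul hnorm i e k
    rw [hie, hke, h, hp13, hee]; ring
  have hp65 : ⟪je, ie⟫ = 0 := by
    have h := oP2 mul hnorm j e i
    rw [hje, hie, h, hp21, hee]; ring
  have hp66 : ⟪je, je⟫ = 1 := by
    have h := oP2 mul hnorm j e j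
    rw [hje, h, hp22, hee]; ring
  have hp67 : ⟪je, ke⟫ = 0 := by
    have h := oP2 mul hnorm j e k
    rw [hje, hke, h, hp23, hee]; ring
  have hp75 : ⟪ke, ie⟫ = 0 := by
    have h := oP2 mul hnorm k e i
    rw [hke, hie, h, hp31, hee]; ring
  have hp76 : ⟪ke, je⟫ = 0 := by
    have h := oP2 mul hnorm k e j
    rw [hke, hje, h, hp32, hee]; ring
  have hp77 : ⟪ke, ke⟫ = 1 := by
    have h := oP2 mul hnorm k e k
    rw [hke, h, hp33, hee]; ring
  have hp05 : ⟪one, ie⟫ = 0 := by rw [real_inner_comm]; exact hp50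
  have hp06 : ⟪one, je⟫ = 0 := by rw [real_inner_comm]; exact hp60
  have hp07 : ⟪one, ke⟫ = 0 := by rw [real_inner_comm]; exact hp70
  have hp15 : ⟪i, ie⟫ = 0 := by rw [real_inner_comm]; exact hp51
  have hp16 : ⟪i, je⟫ = 0 := by rw [real_inner_comm]; exact hp61
  have hp17 : ⟪i, ke⟫ = 0 := by rw [real_inner_comm]; exact hp71
  have hp25 : ⟪j, ie⟫ = 0 := by rw [real_inner_comm]; exact hp52
  have hp26 : ⟪j, je⟫ = 0 := by rw [real_inner_comm]; exact hp62
  have hp27 : ⟪j, ke⟫ = 0 := by rw [real_inner_comm]; exact hp72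
  have hp35 : ⟪k, ie⟫ = 0 := by rw [real_inner_comm]; exact hp53
  have hp36 : ⟪k, je⟫ = 0 := by rw [real_inner_comm]; exact hp63
  have hp37 : ⟪k, ke⟫ = 0 := by rw [real_inner_comm]; exact hp73
  have hp45 : ⟪e, ie⟫ = 0 := by rw [real_inner_comm]; exact hp54
  have hp46 : ⟪e, je⟫ = 0 := by rw [real_inner_comm]; exact hp64
  have hp47 : ⟪e, ke⟫ = 0 := by rw [real_inner_comm]; exact hp74
  have hc5 : conj ie = -ie := by rw [hconj, hp05]; simp
  have hc6 : conj je = -je := by rw [hconj, hp06]; simp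
  have hc7 : conj ke = -ke := by rw [hconj, hp07]; simp
  have m41 : mul e i = -ie := by
    have h := oLemX mul one conj hnorm honel honer hconj h11 e i hp40 hp41
    rw [hc1, map_neg mul i, LinearMap.neg_apply] at h
    rw [hie]; exact h
  have m42 : mul e j = -je := by
    have h := oLemX mul one conj hnorm honel honer hconj h11 e j hp40 hp42
    rw [hc2, map_neg mul j, LinearMap.neg_apply] at h
    rw [hje]; exact h
  have m43 : mul e k = -ke := by
    have h := oLemX mul one conj hnorm honel honer hconj h11 e k hp40 hp43
    rw [hc3, map_neg mul k, LinearMap.neg_apply] at h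
    rw [hke]; exact h
  have m44 : mul e e = -one := oUSQ mul one hnorm honel honer e hp40 hp44
  have m54 : mul ie e = -i := by
    rw [hie]; exact oRI mul one conj hnorm honer hconj h11 e hc4 hp44 i
  have m64 : mul je e = -j := by
    rw [hje]; exact oRI mul one conj hnorm honer hconj h11 e hc4 hp44 j
  have m74 : mul ke e = -k := by
    rw [hke]; exact oRI mul one conj hnorm honer hconj h11 e hc4 hp44 k
  have m45 : mul e ie = i := by
    have h := oCD3 mul one conj hnorm honel honer hconj h11 e one i hp40 hp04 hp40 hp44
      (by rw [honer]; exact hp41)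
    rw [honel, hc1, map_neg mul i, LinearMap.neg_apply, honer, neg_neg] at h
    rw [hie]; exact h
  have m46 : mul e je = j := by
    have h := oCD3 mul one conj hnorm honel honer hconj h11 e one j hp40 hp04 hp40 hp44
      (by rw [honer]; exact hp42)
    rw [honel, hc2, map_neg mul j, LinearMap.neg_apply, honer, neg_neg] at h
    rw [hje]; exact h
  have m47 : mul e ke = k := by
    have h := oCD3 mul one conj hnorm honel honer hconj h11 e one k hp40 hp04 hp40 hp44
      (by rw [honer]; exact hp43)
    rw [honel, hc3, map_neg mul k, LinearMap.neg_apply, honer, neg_neg] at h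
    rw [hke]; exact h
  have m14 : mul i e = ie := hie.symm
  have m24 : mul j e = je := hje.symm
  have m34 : mul k e = ke := hke.symm
  have m15 : mul i ie = -e := by
    have h := oCD1 mul one conj hnorm honel honer hconj h11 e i i hp40 hp04 hp41 hp41 hE11
    rw [m11] at h
    rw [map_neg mul one, LinearMap.neg_apply, honel] at h
    rw [hie]; exact h
  have m16 : mul i je = -ke := by
    have h := oCD1 mul one conj hnorm honel honer hconj h11 e i j hp40 hp04 hp41 hp42 hE21
    rw [m21] at h
    rw [map_neg mul k, LinearMap.neg_apply] at h
    rw [← hke] at h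
    rw [hje]; exact h
  have m17 : mul i ke = je := by
    have h := oCD1 mul one conj hnorm honel honer hconj h11 e i k hp40 hp04 hp41 hp43 hE31
    rw [m31] at h
    rw [← hje] at h
    rw [hke]; exact h
  have m25 : mul j ie = ke := by
    have h := oCD1 mul one conj hnorm honel honer hconj h11 e j i hp40 hp04 hp42 hp41 hE12
    rw [m12] at h
    rw [← hke] at h
    rw [hie]; exact h
  have m26 : mul j je = -e := by
    have h := oCD1 mul one conj hnorm honel honer hconj h11 e j j hp40 hp04 hp42 hp42 hE22
    rw [m22] at h
    rw [map_neg mul one, LinearMap.neg_apply, honel] at h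
    rw [hje]; exact h
  have m27 : mul j ke = -ie := by
    have h := oCD1 mul one conj hnorm honel honer hconj h11 e j k hp40 hp04 hp42 hp43 hE32
    rw [m32] at h
    rw [map_neg mul i, LinearMap.neg_apply] at h
    rw [← hie] at h
    rw [hke]; exact h
  have m35 : mul k ie = -je := by
    have h := oCD1 mul one conj hnorm honel honer hconj h11 e k i hp40 hp04 hp43 hp41 hE13
    rw [m13] at h
    rw [map_neg mul j, LinearMap.neg_apply] at h
    rw [← hje] at h
    rw [hie]; exact h
  have m36 : mul k je = ie := by
    have h := oCD1 mul one conj hnorm honel honer hconj h11 e k j hp40 hp04 hp43 hp42 hE23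
    rw [m23] at h
    rw [← hie] at h
    rw [hje]; exact h
  have m37 : mul k ke = -e := by
    have h := oCD1 mul one conj hnorm honel honer hconj h11 e k k hp40 hp04 hp43 hp43 hE33
    rw [m33] at h
    rw [map_neg mul one, LinearMap.neg_apply, honel] at h
    rw [hke]; exact h
  have m51 : mul ie i = e := by
    have h := oCD2 mul one conj hnorm honel honer hconj h11 e i i hp40 hp04 hp41 hp41 hE11 hc1
    rw [m11] at h
    rw [map_neg mul one, LinearMap.neg_apply, honel, neg_neg] at h
    rw [hie]; exact h
  have m52 : mul ie j = -ke := by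
    have h := oCD2 mul one conj hnorm honel honer hconj h11 e i j hp40 hp04 hp41 hp42 hE12 hc2
    rw [m12] at h
    rw [← hke] at h
    rw [hie]; exact h
  have m53 : mul ie k = je := by
    have h := oCD2 mul one conj hnorm honel honer hconj h11 e i k hp40 hp04 hp41 hp43 hE13 hc3
    rw [m13] at h
    rw [map_neg mul j, LinearMap.neg_apply, neg_neg] at h
    rw [← hje] at h
    rw [hie]; exact h
  have m61 : mul je i = ke := by
    have h := oCD2 mul one conj hnorm honel honer hconj h11 e j i hp40 hp04 hp42 hp41 hE21 hc1
    rw [m21] at h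
    rw [map_neg mul k, LinearMap.neg_apply, neg_neg] at h
    rw [← hke] at h
    rw [hje]; exact h
  have m62 : mul je j = e := by
    have h := oCD2 mul one conj hnorm honel honer hconj h11 e j j hp40 hp04 hp42 hp42 hE22 hc2
    rw [m22] at h
    rw [map_neg mul one, LinearMap.neg_apply, honel, neg_neg] at h
    rw [hje]; exact h
  have m63 : mul je k = -ie := by
    have h := oCD2 mul one conj hnorm honel honer hconj h11 e j k hp40 hp04 hp42 hp43 hE23 hc3
    rw [m23] at h
    rw [← hie] at h
    rw [hje]; exact h
  have m71 : mul ke i = -je := by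
    have h := oCD2 mul one conj hnorm honel honer hconj h11 e k i hp40 hp04 hp43 hp41 hE31 hc1
    rw [m31] at h
    rw [← hje] at h
    rw [hke]; exact h
  have m72 : mul ke j = ie := by
    have h := oCD2 mul one conj hnorm honel honer hconj h11 e k j hp40 hp04 hp43 hp42 hE32 hc2
    rw [m32] at h
    rw [map_neg mul i, LinearMap.neg_apply, neg_neg] at h
    rw [← hie] at h
    rw [hke]; exact h
  have m73 : mul ke k = e := by
    have h := oCD2 mul one conj hnorm honel honer hconj h11 e k k hp40 hp04 hp43 hp43 hE33 hc3
    rw [m33] at h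
    rw [map_neg mul one, LinearMap.neg_apply, honel, neg_neg] at h
    rw [hke]; exact h
  have m55 : mul ie ie = -one := by
    have h := oCD3 mul one conj hnorm honel honer hconj h11 e i i hp40 hp04 hp41 hp44 hE11
    rw [hc1, map_neg mul i, LinearMap.neg_apply, neg_neg, m11] at h
    rw [hie]; exact h
  have m56 : mul ie je = -k := by
    have h := oCD3 mul one conj hnorm honel honer hconj h11 e i j hp40 hp04 hp41 hp44 hE21
    rw [hc2, map_neg mul j, LinearMap.neg_apply, neg_neg, m21] at h
    rw [hie, hje]; exact h
  have m57 : mul ie ke = j := by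
    have h := oCD3 mul one conj hnorm honel honer hconj h11 e i k hp40 hp04 hp41 hp44 hE31
    rw [hc3, map_neg mul k, LinearMap.neg_apply, neg_neg, m31] at h
    rw [hie, hke]; exact h
  have m65 : mul je ie = k := by
    have h := oCD3 mul one conj hnorm honel honer hconj h11 e j i hp40 hp04 hp42 hp44 hE12
    rw [hc1, map_neg mul i, LinearMap.neg_apply, neg_neg, m12] at h
    rw [hje, hie]; exact h
  have m66 : mul je je = -one := by
    have h := oCD3 mul one conj hnorm honel honer hconj h11 e j j hp40 hp04 hp42 hp44 hE22
    rw [hc2, map_neg mul j, LinearMap.neg_apply, neg_neg, m22] at h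
    rw [hje]; exact h
  have m67 : mul je ke = -i := by
    have h := oCD3 mul one conj hnorm honel honer hconj h11 e j k hp40 hp04 hp42 hp44 hE32
    rw [hc3, map_neg mul k, LinearMap.neg_apply, neg_neg, m32] at h
    rw [hje, hke]; exact h
  have m75 : mul ke ie = -j := by
    have h := oCD3 mul one conj hnorm honel honer hconj h11 e k i hp40 hp04 hp43 hp44 hE13
    rw [hc1, map_neg mul i, LinearMap.neg_apply, neg_neg, m13] at h
    rw [hke, hie]; exact h
  have m76 : mul ke je = i := by
    have h := oCD3 mul one conj hnorm honel honer hconj h11 e k j hp40 hp04 hp43 hp44 hE23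
    rw [hc2, map_neg mul j, LinearMap.neg_apply, neg_neg, m23] at h
    rw [hke, hje]; exact h
  have m77 : mul ke ke = -one := by
    have h := oCD3 mul one conj hnorm honel honer hconj h11 e k k hp40 hp04 hp43 hp44 hE33
    rw [hc3, map_neg mul k, LinearMap.neg_apply, neg_neg, m33] at h
    rw [hke]; exact h
  have hC2' : ∀ u v w : A, ⟪f u, mul v (conj w)⟫ + ⟪f v, mul w (conj u)⟫
      + ⟪f w, mul u (conj v)⟫ = 0 := by
    intro u v w
    have h := hC2 u v w
    simp only [hbr, him, inner_neg_right, inner_sub_right, real_inner_smul_right,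
      hfim', mul_zero, sub_zero] at h
    linarith [h]
  have eqn013 : ⟪f one, j⟫ + ⟪f i, k⟫ - ⟪f k, i⟫ = 0 := by
    have h := hC2' one i k
    simp only [hc0, hc1, hc3, m13, honel, honer, map_neg, LinearMap.neg_apply,
      inner_neg_right, neg_neg] at h
    linarith [h]
  have eqn014 : - ⟪f one, ie⟫ + ⟪f i, e⟫ - ⟪f e, i⟫ = 0 := by
    have h := hC2' one i e
    simp only [hc0, hc1, hc4, m14, honel, honer, map_neg, LinearMap.neg_apply,
      inner_neg_right, neg_neg] at h
    linarith [h]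
  have eqn015 : ⟪f one, e⟫ + ⟪f i, ie⟫ - ⟪f ie, i⟫ = 0 := by
    have h := hC2' one i ie
    simp only [hc0, hc1, hc5, m15, honel, honer, map_neg, LinearMap.neg_apply,
      inner_neg_right, neg_neg] at h
    linarith [h]
  have eqn016 : ⟪f one, ke⟫ + ⟪f i, je⟫ - ⟪f je, i⟫ = 0 := by
    have h := hC2' one i je
    simp only [hc0, hc1, hc6, m16, honel, honer, map_neg, LinearMap.neg_apply,
      inner_neg_right, neg_neg] at h
    linarith [h]
  have eqn017 : - ⟪f one, je⟫ + ⟪f i, ke⟫ - ⟪f ke, i⟫ = 0 := by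
    have h := hC2' one i ke
    simp only [hc0, hc1, hc7, m17, honel, honer, map_neg, LinearMap.neg_apply,
      inner_neg_right, neg_neg] at h
    linarith [h]
  have eqn021 : ⟪f one, k⟫ - ⟪f i, j⟫ + ⟪f j, i⟫ = 0 := by
    have h := hC2' one j i
    simp only [hc0, hc1, hc2, m21, honel, honer, map_neg, LinearMap.neg_apply,
      inner_neg_right, neg_neg] at h
    linarith [h]
  have eqn023 : - ⟪f one, i⟫ + ⟪f j, k⟫ - ⟪f k, j⟫ = 0 := by
    have h := hC2' one j k
    simp only [hc0, hc2, hc3, m23, honel, honer, map_neg, LinearMap.neg_apply,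
      inner_neg_right, neg_neg] at h
    linarith [h]
  have eqn025 : - ⟪f one, ke⟫ + ⟪f j, ie⟫ - ⟪f ie, j⟫ = 0 := by
    have h := hC2' one j ie
    simp only [hc0, hc2, hc5, m25, honel, honer, map_neg, LinearMap.neg_apply,
      inner_neg_right, neg_neg] at h
    linarith [h]
  have eqn026 : ⟪f one, e⟫ + ⟪f j, je⟫ - ⟪f je, j⟫ = 0 := by
    have h := hC2' one j je
    simp only [hc0, hc2, hc6, m26, honel, honer, map_neg, LinearMap.neg_apply,
      inner_neg_right, neg_neg] at h
    linarith [h]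
  have eqn027 : ⟪f one, ie⟫ + ⟪f j, ke⟫ - ⟪f ke, j⟫ = 0 := by
    have h := hC2' one j ke
    simp only [hc0, hc2, hc7, m27, honel, honer, map_neg, LinearMap.neg_apply,
      inner_neg_right, neg_neg] at h
    linarith [h]
  have eqn034 : - ⟪f one, ke⟫ + ⟪f k, e⟫ - ⟪f e, k⟫ = 0 := by
    have h := hC2' one k e
    simp only [hc0, hc3, hc4, m34, honel, honer, map_neg, LinearMap.neg_apply,
      inner_neg_right, neg_neg] at h
    linarith [h]
  have eqn035 : ⟪f one, je⟫ + ⟪f k, ie⟫ - ⟪f ie, k⟫ = 0 := by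
    have h := hC2' one k ie
    simp only [hc0, hc3, hc5, m35, honel, honer, map_neg, LinearMap.neg_apply,
      inner_neg_right, neg_neg] at h
    linarith [h]
  have eqn036 : - ⟪f one, ie⟫ + ⟪f k, je⟫ - ⟪f je, k⟫ = 0 := by
    have h := hC2' one k je
    simp only [hc0, hc3, hc6, m36, honel, honer, map_neg, LinearMap.neg_apply,
      inner_neg_right, neg_neg] at h
    linarith [h]
  have eqn037 : ⟪f one, e⟫ + ⟪f k, ke⟫ - ⟪f ke, k⟫ = 0 := by
    have h := hC2' one k ke
    simp only [hc0, hc3, hc7, m37, honel, honer, map_neg, LinearMap.neg_apply,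
      inner_neg_right, neg_neg] at h
    linarith [h]
  have eqn042 : ⟪f one, je⟫ - ⟪f j, e⟫ + ⟪f e, j⟫ = 0 := by
    have h := hC2' one e j
    simp only [hc0, hc2, hc4, m42, honel, honer, map_neg, LinearMap.neg_apply,
      inner_neg_right, neg_neg] at h
    linarith [h]
  have eqn045 : - ⟪f one, i⟫ + ⟪f e, ie⟫ - ⟪f ie, e⟫ = 0 := by
    have h := hC2' one e ie
    simp only [hc0, hc4, hc5, m45, honel, honer, map_neg, LinearMap.neg_apply,
      inner_neg_right, neg_neg] at h
    linarith [h]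
  have eqn046 : - ⟪f one, j⟫ + ⟪f e, je⟫ - ⟪f je, e⟫ = 0 := by
    have h := hC2' one e je
    simp only [hc0, hc4, hc6, m46, honel, honer, map_neg, LinearMap.neg_apply,
      inner_neg_right, neg_neg] at h
    linarith [h]
  have eqn047 : - ⟪f one, k⟫ + ⟪f e, ke⟫ - ⟪f ke, e⟫ = 0 := by
    have h := hC2' one e ke
    simp only [hc0, hc4, hc7, m47, honel, honer, map_neg, LinearMap.neg_apply,
      inner_neg_right, neg_neg] at h
    linarith [h]
  have eqn065 : - ⟪f one, k⟫ - ⟪f ie, je⟫ + ⟪f je, ie⟫ = 0 := by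
    have h := hC2' one je ie
    simp only [hc0, hc5, hc6, m65, honel, honer, map_neg, LinearMap.neg_apply,
      inner_neg_right, neg_neg] at h
    linarith [h]
  have eqn067 : ⟪f one, i⟫ + ⟪f je, ke⟫ - ⟪f ke, je⟫ = 0 := by
    have h := hC2' one je ke
    simp only [hc0, hc6, hc7, m67, honel, honer, map_neg, LinearMap.neg_apply,
      inner_neg_right, neg_neg] at h
    linarith [h]
  have eqn075 : ⟪f one, j⟫ - ⟪f ie, ke⟫ + ⟪f ke, ie⟫ = 0 := by
    have h := hC2' one ke ie
    simp only [hc0, hc5, hc7, m75, honel, honer, map_neg, LinearMap.neg_apply,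
      inner_neg_right, neg_neg] at h
    linarith [h]
  have eqn123 : - ⟪f i, i⟫ - ⟪f j, j⟫ - ⟪f k, k⟫ = 0 := by
    have h := hC2' i j k
    simp only [hc1, hc2, hc3, m12, m23, m31, honel, honer, map_neg, LinearMap.neg_apply,
      inner_neg_right, neg_neg] at h
    linarith [h]
  have eqn124 : - ⟪f i, je⟫ + ⟪f j, ie⟫ - ⟪f e, k⟫ = 0 := by
    have h := hC2' i j e
    simp only [hc1, hc2, hc4, m12, m24, m41, honel, honer, map_neg, LinearMap.neg_apply,
      inner_neg_right, neg_neg] at h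
    linarith [h]
  have eqn125 : - ⟪f i, ke⟫ - ⟪f j, e⟫ - ⟪f ie, k⟫ = 0 := by
    have h := hC2' i j ie
    simp only [hc1, hc2, hc5, m12, m25, m51, honel, honer, map_neg, LinearMap.neg_apply,
      inner_neg_right, neg_neg] at h
    linarith [h]
  have eqn126 : ⟪f i, e⟫ - ⟪f j, ke⟫ - ⟪f je, k⟫ = 0 := by
    have h := hC2' i j je
    simp only [hc1, hc2, hc6, m12, m26, m61, honel, honer, map_neg, LinearMap.neg_apply,
      inner_neg_right, neg_neg] at h
    linarith [h]
  have eqn127 : ⟪f i, ie⟫ + ⟪f j, je⟫ - ⟪f ke, k⟫ = 0 := by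
    have h := hC2' i j ke
    simp only [hc1, hc2, hc7, m12, m27, m71, honel, honer, map_neg, LinearMap.neg_apply,
      inner_neg_right, neg_neg] at h
    linarith [h]
  have eqn134 : - ⟪f i, ke⟫ + ⟪f k, ie⟫ + ⟪f e, j⟫ = 0 := by
    have h := hC2' i k e
    simp only [hc1, hc3, hc4, m13, m34, m41, honel, honer, map_neg, LinearMap.neg_apply,
      inner_neg_right, neg_neg] at h
    linarith [h]
  have eqn135 : ⟪f i, je⟫ - ⟪f k, e⟫ + ⟪f ie, j⟫ = 0 := by
    have h := hC2' i k ie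
    simp only [hc1, hc3, hc5, m13, m35, m51, honel, honer, map_neg, LinearMap.neg_apply,
      inner_neg_right, neg_neg] at h
    linarith [h]
  have eqn136 : - ⟪f i, ie⟫ - ⟪f k, ke⟫ + ⟪f je, j⟫ = 0 := by
    have h := hC2' i k je
    simp only [hc1, hc3, hc6, m13, m36, m61, honel, honer, map_neg, LinearMap.neg_apply,
      inner_neg_right, neg_neg] at h
    linarith [h]
  have eqn137 : ⟪f i, e⟫ + ⟪f k, je⟫ + ⟪f ke, j⟫ = 0 := by
    have h := hC2' i k ke
    simp only [hc1, hc3, hc7, m13, m37, m71, honel, honer, map_neg, LinearMap.neg_apply,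
      inner_neg_right, neg_neg] at h
    linarith [h]
  have eqn145 : - ⟪f i, i⟫ - ⟪f e, e⟫ - ⟪f ie, ie⟫ = 0 := by
    have h := hC2' i e ie
    simp only [hc1, hc4, hc5, m14, m45, m51, honel, honer, map_neg, LinearMap.neg_apply,
      inner_neg_right, neg_neg] at h
    linarith [h]
  have eqn146 : - ⟪f i, j⟫ - ⟪f e, ke⟫ - ⟪f je, ie⟫ = 0 := by
    have h := hC2' i e je
    simp only [hc1, hc4, hc6, m14, m46, m61, honel, honer, map_neg, LinearMap.neg_apply,
      inner_neg_right, neg_neg] at h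
    linarith [h]
  have eqn147 : - ⟪f i, k⟫ + ⟪f e, je⟫ - ⟪f ke, ie⟫ = 0 := by
    have h := hC2' i e ke
    simp only [hc1, hc4, hc7, m14, m47, m71, honel, honer, map_neg, LinearMap.neg_apply,
      inner_neg_right, neg_neg] at h
    linarith [h]
  have eqn156 : ⟪f i, k⟫ - ⟪f ie, ke⟫ + ⟪f je, e⟫ = 0 := by
    have h := hC2' i ie je
    simp only [hc1, hc5, hc6, m15, m56, m61, honel, honer, map_neg, LinearMap.neg_apply,
      inner_neg_right, neg_neg] at h
    linarith [h]
  have eqn157 : - ⟪f i, j⟫ + ⟪f ie, je⟫ + ⟪f ke, e⟫ = 0 := by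
    have h := hC2' i ie ke
    simp only [hc1, hc5, hc7, m15, m57, m71, honel, honer, map_neg, LinearMap.neg_apply,
      inner_neg_right, neg_neg] at h
    linarith [h]
  have eqn167 : ⟪f i, i⟫ + ⟪f je, je⟫ + ⟪f ke, ke⟫ = 0 := by
    have h := hC2' i je ke
    simp only [hc1, hc6, hc7, m16, m67, m71, honel, honer, map_neg, LinearMap.neg_apply,
      inner_neg_right, neg_neg] at h
    linarith [h]
  have eqn234 : - ⟪f j, ke⟫ + ⟪f k, je⟫ - ⟪f e, i⟫ = 0 := by
    have h := hC2' j k e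
    simp only [hc2, hc3, hc4, m23, m34, m42, honel, honer, map_neg, LinearMap.neg_apply,
      inner_neg_right, neg_neg] at h
    linarith [h]
  have eqn235 : ⟪f j, je⟫ + ⟪f k, ke⟫ - ⟪f ie, i⟫ = 0 := by
    have h := hC2' j k ie
    simp only [hc2, hc3, hc5, m23, m35, m52, honel, honer, map_neg, LinearMap.neg_apply,
      inner_neg_right, neg_neg] at h
    linarith [h]
  have eqn236 : - ⟪f j, ie⟫ - ⟪f k, e⟫ - ⟪f je, i⟫ = 0 := by
    have h := hC2' j k je
    simp only [hc2, hc3, hc6, m23, m36, m62, honel, honer, map_neg, LinearMap.neg_apply,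
      inner_neg_right, neg_neg] at h
    linarith [h]
  have eqn237 : ⟪f j, e⟫ - ⟪f k, ie⟫ - ⟪f ke, i⟫ = 0 := by
    have h := hC2' j k ke
    simp only [hc2, hc3, hc7, m23, m37, m72, honel, honer, map_neg, LinearMap.neg_apply,
      inner_neg_right, neg_neg] at h
    linarith [h]
  have eqn245 : - ⟪f j, i⟫ + ⟪f e, ke⟫ - ⟪f ie, je⟫ = 0 := by
    have h := hC2' j e ie
    simp only [hc2, hc4, hc5, m24, m45, m52, honel, honer, map_neg, LinearMap.neg_apply,
      inner_neg_right, neg_neg] at h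
    linarith [h]
  have eqn246 : - ⟪f j, j⟫ - ⟪f e, e⟫ - ⟪f je, je⟫ = 0 := by
    have h := hC2' j e je
    simp only [hc2, hc4, hc6, m24, m46, m62, honel, honer, map_neg, LinearMap.neg_apply,
      inner_neg_right, neg_neg] at h
    linarith [h]
  have eqn247 : - ⟪f j, k⟫ - ⟪f e, ie⟫ - ⟪f ke, je⟫ = 0 := by
    have h := hC2' j e ke
    simp only [hc2, hc4, hc7, m24, m47, m72, honel, honer, map_neg, LinearMap.neg_apply,
      inner_neg_right, neg_neg] at h
    linarith [h]
  have eqn256 : ⟪f j, k⟫ - ⟪f ie, e⟫ - ⟪f je, ke⟫ = 0 := by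
    have h := hC2' j ie je
    simp only [hc2, hc5, hc6, m25, m56, m62, honel, honer, map_neg, LinearMap.neg_apply,
      inner_neg_right, neg_neg] at h
    linarith [h]
  have eqn257 : - ⟪f j, j⟫ - ⟪f ie, ie⟫ - ⟪f ke, ke⟫ = 0 := by
    have h := hC2' j ie ke
    simp only [hc2, hc5, hc7, m25, m57, m72, honel, honer, map_neg, LinearMap.neg_apply,
      inner_neg_right, neg_neg] at h
    linarith [h]
  have eqn267 : ⟪f j, i⟫ - ⟪f je, ie⟫ + ⟪f ke, e⟫ = 0 := by
    have h := hC2' j je ke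
    simp only [hc2, hc6, hc7, m26, m67, m72, honel, honer, map_neg, LinearMap.neg_apply,
      inner_neg_right, neg_neg] at h
    linarith [h]
  have eqn345 : - ⟪f k, i⟫ - ⟪f e, je⟫ - ⟪f ie, ke⟫ = 0 := by
    have h := hC2' k e ie
    simp only [hc3, hc4, hc5, m34, m45, m53, honel, honer, map_neg, LinearMap.neg_apply,
      inner_neg_right, neg_neg] at h
    linarith [h]
  have eqn346 : - ⟪f k, j⟫ + ⟪f e, ie⟫ - ⟪f je, ke⟫ = 0 := by
    have h := hC2' k e je
    simp only [hc3, hc4, hc6, m34, m46, m63, honel, honer, map_neg, LinearMap.neg_apply,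
      inner_neg_right, neg_neg] at h
    linarith [h]
  have eqn347 : - ⟪f k, k⟫ - ⟪f e, e⟫ - ⟪f ke, ke⟫ = 0 := by
    have h := hC2' k e ke
    simp only [hc3, hc4, hc7, m34, m47, m73, honel, honer, map_neg, LinearMap.neg_apply,
      inner_neg_right, neg_neg] at h
    linarith [h]
  have eqn356 : ⟪f k, k⟫ + ⟪f ie, ie⟫ + ⟪f je, je⟫ = 0 := by
    have h := hC2' k ie je
    simp only [hc3, hc5, hc6, m35, m56, m63, honel, honer, map_neg, LinearMap.neg_apply,
      inner_neg_right, neg_neg] at h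
    linarith [h]
  have eqn357 : - ⟪f k, j⟫ - ⟪f ie, e⟫ + ⟪f ke, je⟫ = 0 := by
    have h := hC2' k ie ke
    simp only [hc3, hc5, hc7, m35, m57, m73, honel, honer, map_neg, LinearMap.neg_apply,
      inner_neg_right, neg_neg] at h
    linarith [h]
  have eqn367 : ⟪f k, i⟫ - ⟪f je, e⟫ - ⟪f ke, ie⟫ = 0 := by
    have h := hC2' k je ke
    simp only [hc3, hc6, hc7, m36, m67, m73, honel, honer, map_neg, LinearMap.neg_apply,
      inner_neg_right, neg_neg] at h
    linarith [h]
  have eqn456 : ⟪f e, k⟫ + ⟪f ie, j⟫ - ⟪f je, i⟫ = 0 := by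
    have h := hC2' e ie je
    simp only [hc4, hc5, hc6, m45, m56, m64, honel, honer, map_neg, LinearMap.neg_apply,
      inner_neg_right, neg_neg] at h
    linarith [h]
  have eqn457 : - ⟪f e, j⟫ + ⟪f ie, k⟫ - ⟪f ke, i⟫ = 0 := by
    have h := hC2' e ie ke
    simp only [hc4, hc5, hc7, m45, m57, m74, honel, honer, map_neg, LinearMap.neg_apply,
      inner_neg_right, neg_neg] at h
    linarith [h]
  have eqn467 : ⟪f e, i⟫ + ⟪f je, k⟫ - ⟪f ke, j⟫ = 0 := by
    have h := hC2' e je ke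
    simp only [hc4, hc6, hc7, m46, m67, m74, honel, honer, map_neg, LinearMap.neg_apply,
      inner_neg_right, neg_neg] at h
    linarith [h]
  have eqn567 : ⟪f ie, i⟫ + ⟪f je, j⟫ + ⟪f ke, k⟫ = 0 := by
    have h := hC2' ie je ke
    simp only [hc5, hc6, hc7, m56, m67, m75, honel, honer, map_neg, LinearMap.neg_apply,
      inner_neg_right, neg_neg] at h
    linarith [h]
  have cz01 : ⟪f one, i⟫ = 0 := by linear_combination - (1/3) * eqn023 - (1/3) * eqn045 + (1/3) * eqn067 - (1/6) * eqn247 + (1/6) * eqn256 + (1/6) * eqn346 + (1/6) * eqn357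
  have cz02 : ⟪f one, j⟫ = 0 := by linear_combination (1/3) * eqn013 - (1/3) * eqn046 + (1/3) * eqn075 + (1/6) * eqn147 - (1/6) * eqn156 - (1/6) * eqn345 + (1/6) * eqn367
  have cz03 : ⟪f one, k⟫ = 0 := by linear_combination (1/3) * eqn021 - (1/3) * eqn047 - (1/3) * eqn065 - (1/6) * eqn146 - (1/6) * eqn157 + (1/6) * eqn245 - (1/6) * eqn267
  have cz04 : ⟪f one, e⟫ = 0 := by linear_combination (1/3) * eqn015 + (1/3) * eqn026 + (1/3) * eqn037 - (1/6) * eqn127 + (1/6) * eqn136 - (1/6) * eqn235 + (1/6) * eqn567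
  have cz05 : ⟪f one, ie⟫ = 0 := by linear_combination - (1/3) * eqn014 + (1/3) * eqn027 - (1/3) * eqn036 + (1/6) * eqn126 + (1/6) * eqn137 + (1/6) * eqn234 - (1/6) * eqn467
  have cz06 : ⟪f one, je⟫ = 0 := by linear_combination - (1/3) * eqn017 + (1/3) * eqn035 + (1/3) * eqn042 - (1/6) * eqn125 - (1/6) * eqn134 + (1/6) * eqn237 + (1/6) * eqn457
  have cz07 : ⟪f one, ke⟫ = 0 := by linear_combination (1/3) * eqn016 - (1/3) * eqn025 - (1/3) * eqn034 + (1/6) * eqn124 - (1/6) * eqn135 - (1/6) * eqn236 - (1/6) * eqn456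
  have cz11 : ⟪f i, i⟫ = 0 := by linear_combination - (1/3) * eqn123 - (1/3) * eqn145 + (1/3) * eqn167 + (1/6) * eqn246 + (1/6) * eqn257 + (1/6) * eqn347 - (1/6) * eqn356
  have cz12 : ⟪f i, j⟫ = 0 := by linear_combination - (1/3) * eqn021 - (1/6) * eqn047 - (1/6) * eqn065 - (1/3) * eqn146 - (1/3) * eqn157 - (1/6) * eqn245 + (1/6) * eqn267
  have cz13 : ⟪f i, k⟫ = 0 := by linear_combination (1/3) * eqn013 + (1/6) * eqn046 - (1/6) * eqn075 - (1/3) * eqn147 + (1/3) * eqn156 - (1/6) * eqn345 + (1/6) * eqn367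
  have cz14 : ⟪f i, e⟫ = 0 := by linear_combination (1/3) * eqn014 + (1/6) * eqn027 - (1/6) * eqn036 + (1/3) * eqn126 + (1/3) * eqn137 - (1/6) * eqn234 + (1/6) * eqn467
  have cz15 : ⟪f i, ie⟫ = 0 := by linear_combination (1/3) * eqn015 - (1/6) * eqn026 - (1/6) * eqn037 + (1/3) * eqn127 - (1/3) * eqn136 - (1/6) * eqn235 + (1/6) * eqn567
  have cz16 : ⟪f i, je⟫ = 0 := by linear_combination (1/3) * eqn016 + (1/6) * eqn025 + (1/6) * eqn034 - (1/3) * eqn124 + (1/3) * eqn135 - (1/6) * eqn236 - (1/6) * eqn456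
  have cz17 : ⟪f i, ke⟫ = 0 := by linear_combination (1/3) * eqn017 + (1/6) * eqn035 + (1/6) * eqn042 - (1/3) * eqn125 - (1/3) * eqn134 - (1/6) * eqn237 - (1/6) * eqn457
  have cz21 : ⟪f j, i⟫ = 0 := by linear_combination (1/3) * eqn021 + (1/6) * eqn047 + (1/6) * eqn065 - (1/6) * eqn146 - (1/6) * eqn157 - (1/3) * eqn245 + (1/3) * eqn267
  have cz22 : ⟪f j, j⟫ = 0 := by linear_combination - (1/3) * eqn123 + (1/6) * eqn145 - (1/6) * eqn167 - (1/3) * eqn246 - (1/3) * eqn257 + (1/6) * eqn347 - (1/6) * eqn356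
  have cz23 : ⟪f j, k⟫ = 0 := by linear_combination (1/3) * eqn023 - (1/6) * eqn045 + (1/6) * eqn067 - (1/3) * eqn247 + (1/3) * eqn256 - (1/6) * eqn346 - (1/6) * eqn357
  have cz24 : ⟪f j, e⟫ = 0 := by linear_combination - (1/6) * eqn017 + (1/6) * eqn035 - (1/3) * eqn042 - (1/3) * eqn125 + (1/6) * eqn134 + (1/3) * eqn237 - (1/6) * eqn457
  have cz25 : ⟪f j, ie⟫ = 0 := by linear_combination (1/6) * eqn016 + (1/3) * eqn025 - (1/6) * eqn034 + (1/3) * eqn124 + (1/6) * eqn135 - (1/3) * eqn236 + (1/6) * eqn456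
  have cz26 : ⟪f j, je⟫ = 0 := by linear_combination - (1/6) * eqn015 + (1/3) * eqn026 - (1/6) * eqn037 + (1/3) * eqn127 + (1/6) * eqn136 + (1/3) * eqn235 + (1/6) * eqn567
  have cz27 : ⟪f j, ke⟫ = 0 := by linear_combination (1/6) * eqn014 + (1/3) * eqn027 + (1/6) * eqn036 - (1/3) * eqn126 + (1/6) * eqn137 - (1/3) * eqn234 - (1/6) * eqn467
  have cz31 : ⟪f k, i⟫ = 0 := by linear_combination - (1/3) * eqn013 - (1/6) * eqn046 + (1/6) * eqn075 - (1/6) * eqn147 + (1/6) * eqn156 - (1/3) * eqn345 + (1/3) * eqn367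
  have cz32 : ⟪f k, j⟫ = 0 := by linear_combination - (1/3) * eqn023 + (1/6) * eqn045 - (1/6) * eqn067 - (1/6) * eqn247 + (1/6) * eqn256 - (1/3) * eqn346 - (1/3) * eqn357
  have cz33 : ⟪f k, k⟫ = 0 := by linear_combination - (1/3) * eqn123 + (1/6) * eqn145 - (1/6) * eqn167 + (1/6) * eqn246 + (1/6) * eqn257 - (1/3) * eqn347 + (1/3) * eqn356
  have cz34 : ⟪f k, e⟫ = 0 := by linear_combination (1/6) * eqn016 - (1/6) * eqn025 + (1/3) * eqn034 - (1/6) * eqn124 - (1/3) * eqn135 - (1/3) * eqn236 + (1/6) * eqn456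
  have cz35 : ⟪f k, ie⟫ = 0 := by linear_combination (1/6) * eqn017 + (1/3) * eqn035 - (1/6) * eqn042 - (1/6) * eqn125 + (1/3) * eqn134 - (1/3) * eqn237 + (1/6) * eqn457
  have cz36 : ⟪f k, je⟫ = 0 := by linear_combination - (1/6) * eqn014 + (1/6) * eqn027 + (1/3) * eqn036 - (1/6) * eqn126 + (1/3) * eqn137 + (1/3) * eqn234 + (1/6) * eqn467
  have cz37 : ⟪f k, ke⟫ = 0 := by linear_combination - (1/6) * eqn015 - (1/6) * eqn026 + (1/3) * eqn037 - (1/6) * eqn127 - (1/3) * eqn136 + (1/3) * eqn235 + (1/6) * eqn567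
  have cz41 : ⟪f e, i⟫ = 0 := by linear_combination - (1/3) * eqn014 - (1/6) * eqn027 + (1/6) * eqn036 + (1/6) * eqn126 + (1/6) * eqn137 - (1/3) * eqn234 + (1/3) * eqn467
  have cz42 : ⟪f e, j⟫ = 0 := by linear_combination (1/6) * eqn017 - (1/6) * eqn035 + (1/3) * eqn042 - (1/6) * eqn125 + (1/3) * eqn134 + (1/6) * eqn237 - (1/3) * eqn457
  have cz43 : ⟪f e, k⟫ = 0 := by linear_combination - (1/6) * eqn016 + (1/6) * eqn025 - (1/3) * eqn034 - (1/3) * eqn124 - (1/6) * eqn135 - (1/6) * eqn236 + (1/3) * eqn456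
  have cz44 : ⟪f e, e⟫ = 0 := by linear_combination (1/6) * eqn123 - (1/3) * eqn145 - (1/6) * eqn167 - (1/3) * eqn246 + (1/6) * eqn257 - (1/3) * eqn347 - (1/6) * eqn356
  have cz45 : ⟪f e, ie⟫ = 0 := by linear_combination - (1/6) * eqn023 + (1/3) * eqn045 + (1/6) * eqn067 - (1/3) * eqn247 - (1/6) * eqn256 + (1/3) * eqn346 - (1/6) * eqn357
  have cz46 : ⟪f e, je⟫ = 0 := by linear_combination (1/6) * eqn013 + (1/3) * eqn046 + (1/6) * eqn075 + (1/3) * eqn147 + (1/6) * eqn156 - (1/3) * eqn345 - (1/6) * eqn367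
  have cz47 : ⟪f e, ke⟫ = 0 := by linear_combination (1/6) * eqn021 + (1/3) * eqn047 - (1/6) * eqn065 - (1/3) * eqn146 + (1/6) * eqn157 + (1/3) * eqn245 + (1/6) * eqn267
  have cz51 : ⟪f ie, i⟫ = 0 := by linear_combination - (1/3) * eqn015 + (1/6) * eqn026 + (1/6) * eqn037 + (1/6) * eqn127 - (1/6) * eqn136 - (1/3) * eqn235 + (1/3) * eqn567
  have cz52 : ⟪f ie, j⟫ = 0 := by linear_combination - (1/6) * eqn016 - (1/3) * eqn025 + (1/6) * eqn034 + (1/6) * eqn124 + (1/3) * eqn135 - (1/6) * eqn236 + (1/3) * eqn456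
  have cz53 : ⟪f ie, k⟫ = 0 := by linear_combination - (1/6) * eqn017 - (1/3) * eqn035 + (1/6) * eqn042 - (1/3) * eqn125 + (1/6) * eqn134 - (1/6) * eqn237 + (1/3) * eqn457
  have cz54 : ⟪f ie, e⟫ = 0 := by linear_combination (1/6) * eqn023 - (1/3) * eqn045 - (1/6) * eqn067 - (1/6) * eqn247 - (1/3) * eqn256 + (1/6) * eqn346 - (1/3) * eqn357
  have cz55 : ⟪f ie, ie⟫ = 0 := by linear_combination (1/6) * eqn123 - (1/3) * eqn145 - (1/6) * eqn167 + (1/6) * eqn246 - (1/3) * eqn257 + (1/6) * eqn347 + (1/3) * eqn356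
  have cz56 : ⟪f ie, je⟫ = 0 := by linear_combination - (1/6) * eqn021 + (1/6) * eqn047 - (1/3) * eqn065 - (1/6) * eqn146 + (1/3) * eqn157 - (1/3) * eqn245 - (1/6) * eqn267
  have cz57 : ⟪f ie, ke⟫ = 0 := by linear_combination (1/6) * eqn013 - (1/6) * eqn046 - (1/3) * eqn075 - (1/6) * eqn147 - (1/3) * eqn156 - (1/3) * eqn345 - (1/6) * eqn367
  have cz61 : ⟪f je, i⟫ = 0 := by linear_combination - (1/3) * eqn016 - (1/6) * eqn025 - (1/6) * eqn034 - (1/6) * eqn124 + (1/6) * eqn135 - (1/3) * eqn236 - (1/3) * eqn456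
  have cz62 : ⟪f je, j⟫ = 0 := by linear_combination (1/6) * eqn015 - (1/3) * eqn026 + (1/6) * eqn037 + (1/6) * eqn127 + (1/3) * eqn136 + (1/6) * eqn235 + (1/3) * eqn567
  have cz63 : ⟪f je, k⟫ = 0 := by linear_combination (1/6) * eqn014 - (1/6) * eqn027 - (1/3) * eqn036 - (1/3) * eqn126 + (1/6) * eqn137 + (1/6) * eqn234 + (1/3) * eqn467
  have cz64 : ⟪f je, e⟫ = 0 := by linear_combination - (1/6) * eqn013 - (1/3) * eqn046 - (1/6) * eqn075 + (1/6) * eqn147 + (1/3) * eqn156 - (1/6) * eqn345 - (1/3) * eqn367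
  have cz65 : ⟪f je, ie⟫ = 0 := by linear_combination (1/6) * eqn021 - (1/6) * eqn047 + (1/3) * eqn065 - (1/3) * eqn146 + (1/6) * eqn157 - (1/6) * eqn245 - (1/3) * eqn267
  have cz66 : ⟪f je, je⟫ = 0 := by linear_combination (1/6) * eqn123 + (1/6) * eqn145 + (1/3) * eqn167 - (1/3) * eqn246 + (1/6) * eqn257 + (1/6) * eqn347 + (1/3) * eqn356
  have cz67 : ⟪f je, ke⟫ = 0 := by linear_combination (1/6) * eqn023 + (1/6) * eqn045 + (1/3) * eqn067 - (1/6) * eqn247 - (1/3) * eqn256 - (1/3) * eqn346 + (1/6) * eqn357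
  have cz71 : ⟪f ke, i⟫ = 0 := by linear_combination - (1/3) * eqn017 - (1/6) * eqn035 - (1/6) * eqn042 - (1/6) * eqn125 - (1/6) * eqn134 - (1/3) * eqn237 - (1/3) * eqn457
  have cz72 : ⟪f ke, j⟫ = 0 := by linear_combination - (1/6) * eqn014 - (1/3) * eqn027 - (1/6) * eqn036 - (1/6) * eqn126 + (1/3) * eqn137 - (1/6) * eqn234 - (1/3) * eqn467
  have cz73 : ⟪f ke, k⟫ = 0 := by linear_combination (1/6) * eqn015 + (1/6) * eqn026 - (1/3) * eqn037 - (1/3) * eqn127 - (1/6) * eqn136 + (1/6) * eqn235 + (1/3) * eqn567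
  have cz74 : ⟪f ke, e⟫ = 0 := by linear_combination - (1/6) * eqn021 - (1/3) * eqn047 + (1/6) * eqn065 - (1/6) * eqn146 + (1/3) * eqn157 + (1/6) * eqn245 + (1/3) * eqn267
  have cz75 : ⟪f ke, ie⟫ = 0 := by linear_combination - (1/6) * eqn013 + (1/6) * eqn046 + (1/3) * eqn075 - (1/3) * eqn147 - (1/6) * eqn156 - (1/6) * eqn345 - (1/3) * eqn367
  have cz76 : ⟪f ke, je⟫ = 0 := by linear_combination - (1/6) * eqn023 - (1/6) * eqn045 - (1/3) * eqn067 - (1/3) * eqn247 - (1/6) * eqn256 - (1/6) * eqn346 + (1/3) * eqn357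
  have cz77 : ⟪f ke, ke⟫ = 0 := by linear_combination (1/6) * eqn123 + (1/6) * eqn145 + (1/3) * eqn167 + (1/6) * eqn246 - (1/3) * eqn257 - (1/3) * eqn347 - (1/6) * eqn356
  have hON : Orthonormal ℝ ![one, i, j, k, e, ie, je, ke] := by
    rw [orthonormal_iff_ite]
    intro p q
    fin_cases p <;> fin_cases q <;>
      norm_num [-inner_self_eq_norm_sq_to_K, Fin.ext_iff, hp00, hp01, hp02, hp03, hp04, hp05, hp06, hp07, hp10, hp11, hp12, hp13, hp14, hp15, hp16, hp17, hp20, hp21, hp22, hp23, hp24, hp25, hp26, hp27, hp30, hp31, hp32, hp33, hp34, hp35, hp36, hp37, hp40, hp41, hp42, hp43, hp44, hp45, hp46, hp47, hp50, hp51, hp52, hp53, hp54, hp55, hp56, hp57, hp60, hp61, hp62, hp63, hp64, hp65, hp66, hp67, hp70, hp71, hp72, hp73, hp74, hp75, hp76, hp77]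
  have hsp : Submodule.span ℝ (Set.range ![one, i, j, k, e, ie, je, ke]) = ⊤ :=
    hON.linearIndependent.span_eq_top_of_card_eq_finrank (by simp [hdim])
  have hzero : ∀ x : A, ⟪x, one⟫ = 0 → ⟪x, i⟫ = 0 → ⟪x, j⟫ = 0 → ⟪x, k⟫ = 0 →
      ⟪x, e⟫ = 0 → ⟪x, ie⟫ = 0 → ⟪x, je⟫ = 0 → ⟪x, ke⟫ = 0 → x = 0 := by
    intro x h0 h1 h2 h3 h4 h5 h6 h7
    have hx : x ∈ Submodule.span ℝ (Set.range ![one, i, j, k, e, ie, je, ke]) := by rw [hsp]; trivial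
    have hall : ∀ y ∈ Submodule.span ℝ (Set.range ![one, i, j, k, e, ie, je, ke]), ⟪x, y⟫ = 0 := by
      intro y hy
      induction hy using Submodule.span_induction with
      | mem y hy =>
        obtain ⟨p, rfl⟩ := hy
        fin_cases p
        · simpa using h0
        · simpa using h1
        · simpa using h2
        · simpa using h3
        · simpa using h4
        · simpa using h5
        · simpa using h6
        · simpa using h7
      | zero => exact inner_zero_right x
      | add u v hu hv ihu ihv => rw [inner_add_right, ihu, ihv, add_zero]
      | smul r u hu ihu => rw [real_inner_smul_right, ihu, mul_zero]
    exact inner_self_eq_zero.mp (hall x hx)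
  have hfb0 : f one = 0 := hzero (f one) (hfim' one) cz01 cz02 cz03 cz04 cz05 cz06 cz07
  have hfb1 : f i = 0 := hzero (f i) (hfim' i) cz11 cz12 cz13 cz14 cz15 cz16 cz17
  have hfb2 : f j = 0 := hzero (f j) (hfim' j) cz21 cz22 cz23 cz24 cz25 cz26 cz27
  have hfb3 : f k = 0 := hzero (f k) (hfim' k) cz31 cz32 cz33 cz34 cz35 cz36 cz37
  have hfb4 : f e = 0 := hzero (f e) (hfim' e) cz41 cz42 cz43 cz44 cz45 cz46 cz47
  have hfb5 : f ie = 0 := hzero (f ie) (hfim' ie) cz51 cz52 cz53 cz54 cz55 cz56 cz57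
  have hfb6 : f je = 0 := hzero (f je) (hfim' je) cz61 cz62 cz63 cz64 cz65 cz66 cz67
  have hfb7 : f ke = 0 := hzero (f ke) (hfim' ke) cz71 cz72 cz73 cz74 cz75 cz76 cz77
  have hfall : ∀ u : A, f u = 0 := by
    intro u
    have hu : u ∈ Submodule.span ℝ (Set.range ![one, i, j, k, e, ie, je, ke]) := by rw [hsp]; trivial
    induction hu using Submodule.span_induction with
    | mem y hy =>
      obtain ⟨p, rfl⟩ := hy
      fin_cases p
      · exact hfb0
      · exact hfb1
      · exact hfb2
      · exact hfb3
      · exact hfb4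
      · exact hfb5
      · exact hfb6
      · exact hfb7
    | zero => exact map_zero f
    | add u v hu hv ihu ihv => rw [map_add, ihu, ihv, add_zero]
    | smul r u hu ihu => rw [map_smul, ihu, smul_zero]
  constructor
  · exact LinearMap.ext fun u => (hfall u).trans (LinearMap.zero_apply u).symm
  · intro zz hzz
    have hall : ∀ u : A, ⟪u, g zz⟫ = 0 := by
      intro u
      have h := hskew u zz hzz
      rw [hfall u, inner_zero_left] at h
      linarith [h]
    exact inner_self_eq_zero.mp (hall (g zz))
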